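/- Let f(x) be a formal power series over a field of characteristic zero with nonzero coefficient of x (so x·f(x) or similar setups make the relevant coefficients well-defined), and let k ≥ 1 be a natural number. Then for all integers m ≥ 1: (1/m)·[coefficient of x^{m-k} in f(x)^m] = (1/k)·∑_{n_1+⋯+n_k=m, n_i ≥ 1} ∏_{i=1}^{k} (1/n_i)·[coefficient of x^{n_i - 1} in f(x)^{n_i}]. -/

import Mathlib

open PowerSeries Finset

namespace Stmt1Aux

variable {K : Type*} [Field K]

lemma coeff_X_pow_mul_ite (F : PowerSeries K) (k m : ℕ) :
    coeff (R := K) m ((X : PowerSeries K) ^ k * F) = if k ≤ m then coeff (R := K) (m - k) F else 0 := by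
  by_cases h : k ≤ m
  · rw [if_pos h]
    obtain ⟨d, rfl⟩ := Nat.exists_eq_add_of_le h
    rw [add_comm k d, PowerSeries.coeff_X_pow_mul, Nat.add_sub_cancel]
  · rw [if_neg h, coeff_mul]
    apply Finset.sum_eq_zero
    rintro ⟨i, j⟩ hij
    rw [HasAntidiagonal.mem_antidiagonal] at hij
    rw [PowerSeries.coeff_X_pow, if_neg (by omega), zero_mul]

lemma coeff_X_mul_derivative (F : PowerSeries K) (i : ℕ) :
    coeff (R := K) i ((X : PowerSeries K) * d⁄dX K F) = (i : K) * coeff (R := K) i F := by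
  cases i with
  | zero => simp
  | succ n =>
    rw [PowerSeries.coeff_succ_X_mul, PowerSeries.coeff_derivative]
    push_cast
    ring

lemma key (f : PowerSeries K) (p q n : ℕ) (hp : 1 ≤ p) :
    ((p + q : ℕ) : K) *
        ∑ ij ∈ antidiagonal n, ((ij.1 : K) * coeff (R := K) ij.1 (f ^ p) * coeff (R := K) ij.2 (f ^ q)) =
      (p : K) * (n : K) * coeff (R := K) n (f ^ (p + q)) := by
  have hd : ∀ r : ℕ, (X : PowerSeries K) * d⁄dX K (f ^ r) =
      (r : PowerSeries K) * (X * d⁄dX K f * f ^ (r - 1)) := by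
    intro r
    rw [Derivation.leibniz_pow, smul_eq_mul, nsmul_eq_mul]
    ring
  have hsum : ∑ ij ∈ antidiagonal n, ((ij.1 : K) * coeff (R := K) ij.1 (f ^ p) * coeff (R := K) ij.2 (f ^ q))
      = coeff (R := K) n ((X * d⁄dX K (f ^ p)) * f ^ q) := by
    rw [coeff_mul]
    exact Finset.sum_congr rfl fun ij _ => by rw [coeff_X_mul_derivative]
  rw [hsum]
  have e1 : (X * d⁄dX K (f ^ p)) * f ^ q
      = (p : PowerSeries K) * (X * d⁄dX K f * f ^ (p + q - 1)) := by
    rw [hd p]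
    have hpq : p + q - 1 = (p - 1) + q := by omega
    rw [hpq, pow_add]
    ring
  have e2 : (n : K) * coeff (R := K) n (f ^ (p + q))
      = coeff (R := K) n ((↑(p + q) : PowerSeries K) * (X * d⁄dX K f * f ^ (p + q - 1))) := by
    rw [← hd (p + q), coeff_X_mul_derivative]
  have hC : ∀ (r : ℕ) (G : PowerSeries K),
      coeff (R := K) n ((r : PowerSeries K) * G) = (r : K) * coeff (R := K) n G := by
    intro r G
    rw [← map_natCast (C (R := K)) r, PowerSeries.coeff_C_mul]
  rw [e1, hC]
  rw [hC] at e2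
  push_cast at e2 ⊢
  linear_combination (-(p : K)) * e2

/-- coefficient of a power as a sum over tuples -/
lemma coeff_pow_tuple (φ : PowerSeries K) (k m : ℕ) :
    coeff (R := K) m (φ ^ k) = ∑ x ∈ Finset.Nat.antidiagonalTuple k m, ∏ i, coeff (R := K) (x i) φ := by
  induction k generalizing m with
  | zero =>
    cases m with
    | zero => simp
    | succ m => simp [Finset.Nat.antidiagonalTuple_zero_succ, PowerSeries.coeff_one]
  | succ k ih =>
    rw [pow_succ', coeff_mul]
    have : ∀ ij ∈ antidiagonal m, coeff (R := K) ij.1 φ * coeff (R := K) ij.2 (φ ^ k)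
        = ∑ y ∈ Finset.Nat.antidiagonalTuple k ij.2, coeff (R := K) ij.1 φ * ∏ i, coeff (R := K) (y i) φ := by
      intro ij _
      rw [ih, Finset.mul_sum]
    rw [Finset.sum_congr rfl this, Finset.sum_sigma']
    refine Finset.sum_nbij' (fun p => Fin.cons p.1.1 p.2)
      (fun y => ⟨(y 0, ∑ i : Fin k, y i.succ), Fin.tail y⟩) ?_ ?_ ?_ ?_ ?_
    · rintro ⟨⟨a, b⟩, y⟩ hp
      simp only [Finset.mem_sigma, HasAntidiagonal.mem_antidiagonal, Finset.Nat.mem_antidiagonalTuple] at hp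
      simp only [Finset.Nat.mem_antidiagonalTuple, Fin.sum_univ_succ, Fin.cons_zero, Fin.cons_succ]
      rw [hp.2, hp.1]
    · rintro y hy
      simp only [Finset.Nat.mem_antidiagonalTuple] at hy
      simp only [Finset.mem_sigma, HasAntidiagonal.mem_antidiagonal, Finset.Nat.mem_antidiagonalTuple]
      refine ⟨?_, rfl⟩
      rw [← hy, Fin.sum_univ_succ]
    · rintro ⟨⟨a, b⟩, y⟩ hp
      simp only [Finset.mem_sigma, HasAntidiagonal.mem_antidiagonal, Finset.Nat.mem_antidiagonalTuple] at hp
      have h1 : ∑ i : Fin k, (Fin.cons a y : Fin (k + 1) → ℕ) i.succ = b := by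
        simp only [Fin.cons_succ]
        exact hp.2
      simp only [Fin.cons_zero, h1, Fin.tail_cons]
    · intro y hy
      exact Fin.cons_self_tail y
    · rintro ⟨⟨a, b⟩, y⟩ hp
      simp [Fin.prod_univ_succ]


lemma coeff_pow_congr {φ ψ : PowerSeries K} {n : ℕ} (h : ∀ i ≤ n, coeff (R := K) i φ = coeff (R := K) i ψ)
    (j : ℕ) : coeff (R := K) n (φ ^ j) = coeff (R := K) n (ψ ^ j) := by
  rw [coeff_pow_tuple, coeff_pow_tuple]
  refine Finset.sum_congr rfl fun x hx => Finset.prod_congr rfl fun i _ => ?_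
  rw [Finset.Nat.mem_antidiagonalTuple] at hx
  exact h _ (hx ▸ Finset.single_le_sum (f := fun i => x i) (fun _ _ => Nat.zero_le _)
    (Finset.mem_univ i))

noncomputable def sc (f : PowerSeries K) : ℕ → K
  | 0 => 0
  | n + 1 =>
    ∑ j ∈ Finset.range (n + 1),
      coeff (R := K) j f *
        coeff (R := K) n ((PowerSeries.mk fun i => if _ : i < n + 1 then sc f i else 0) ^ j)

/-- the fixed point `g = X * f(g)` -/
noncomputable def gg (f : PowerSeries K) : PowerSeries K := PowerSeries.mk (sc f)

lemma coeff_gg_zero (f : PowerSeries K) : coeff (R := K) 0 (gg f) = 0 := by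
  rw [gg, coeff_mk, sc]

lemma coeff_gg_succ (f : PowerSeries K) (n : ℕ) :
    coeff (R := K) (n + 1) (gg f) = ∑ j ∈ Finset.range (n + 1), coeff (R := K) j f * coeff (R := K) n ((gg f) ^ j) := by
  rw [gg, coeff_mk, sc]
  refine Finset.sum_congr rfl fun j _ => ?_
  congr 1
  refine coeff_pow_congr (fun i hi => ?_) j
  rw [coeff_mk, coeff_mk, dif_pos (by omega)]

/-- `f(g)` -/
noncomputable def hh (f : PowerSeries K) : PowerSeries K :=
  PowerSeries.mk fun n => ∑ j ∈ Finset.range (n + 1), coeff (R := K) j f * coeff (R := K) n ((gg f) ^ j)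

lemma gg_eq (f : PowerSeries K) : gg f = X * hh f := by
  ext n
  cases n with
  | zero => simp [coeff_gg_zero]
  | succ n => rw [PowerSeries.coeff_succ_X_mul, coeff_gg_succ, hh, coeff_mk]

lemma coeff_gg_pow_eq (f : PowerSeries K) (j m : ℕ) :
    coeff (R := K) m ((gg f) ^ j) = if j ≤ m then coeff (R := K) (m - j) ((hh f) ^ j) else 0 := by
  rw [gg_eq, mul_pow, coeff_X_pow_mul_ite]

lemma coeff_gg_pow_of_lt (f : PowerSeries K) {j m : ℕ} (h : m < j) :
    coeff (R := K) m ((gg f) ^ j) = 0 := by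
  rw [coeff_gg_pow_eq, if_neg (by omega)]

lemma coeff_hh_pow (f : PowerSeries K) (k : ℕ) : ∀ n : ℕ,
    coeff (R := K) n ((hh f) ^ k) = ∑ j ∈ Finset.range (n + 1), coeff (R := K) j (f ^ k) * coeff (R := K) n ((gg f) ^ j) := by
  induction k with
  | zero =>
    intro n
    rw [pow_zero, Finset.sum_eq_single 0]
    · simp
    · intro j _ hj
      rw [pow_zero, PowerSeries.coeff_one, if_neg hj, zero_mul]
    · intro h
      exact absurd (Finset.mem_range.2 (Nat.succ_pos n)) h
  | succ k ih =>
    intro n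
    have expand : ∀ pq ∈ antidiagonal n, coeff (R := K) pq.1 ((hh f) ^ k) * coeff (R := K) pq.2 (hh f)
        = ∑ a ∈ Finset.range (n + 1), ∑ b ∈ Finset.range (n + 1),
            coeff (R := K) a (f ^ k) * coeff (R := K) b f *
              (coeff (R := K) pq.1 ((gg f) ^ a) * coeff (R := K) pq.2 ((gg f) ^ b)) := by
      rintro ⟨p, q⟩ hpq
      rw [HasAntidiagonal.mem_antidiagonal] at hpq
      have h1 : coeff (R := K) p ((hh f) ^ k)
          = ∑ a ∈ Finset.range (n + 1), coeff (R := K) a (f ^ k) * coeff (R := K) p ((gg f) ^ a) := by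
        rw [ih p]
        refine Finset.sum_subset (Finset.range_subset_range.2 (by omega)) fun a _ ha => ?_
        rw [Finset.mem_range] at ha
        rw [coeff_gg_pow_of_lt f (by omega), mul_zero]
      have h2 : coeff (R := K) q (hh f)
          = ∑ b ∈ Finset.range (n + 1), coeff (R := K) b f * coeff (R := K) q ((gg f) ^ b) := by
        rw [hh, coeff_mk]
        refine Finset.sum_subset (Finset.range_subset_range.2 (by omega)) fun b _ hb => ?_
        rw [Finset.mem_range] at hb
        rw [coeff_gg_pow_of_lt f (by omega), mul_zero]
      rw [h1, h2, Finset.sum_mul_sum]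
      refine Finset.sum_congr rfl fun a _ => Finset.sum_congr rfl fun b _ => by ring
    rw [pow_succ, coeff_mul, Finset.sum_congr rfl expand, Finset.sum_comm]
    have swap2 : ∀ a ∈ Finset.range (n + 1),
        (∑ pq ∈ antidiagonal n, ∑ b ∈ Finset.range (n + 1),
          coeff (R := K) a (f ^ k) * coeff (R := K) b f * (coeff (R := K) pq.1 ((gg f) ^ a) * coeff (R := K) pq.2 ((gg f) ^ b)))
        = ∑ b ∈ Finset.range (n + 1),
            coeff (R := K) a (f ^ k) * coeff (R := K) b f * coeff (R := K) n ((gg f) ^ (a + b)) := by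
      intro a _
      rw [Finset.sum_comm]
      refine Finset.sum_congr rfl fun b _ => ?_
      rw [← Finset.mul_sum, ← coeff_mul, ← pow_add]
    rw [Finset.sum_congr rfl swap2]
    -- now RHS
    have rhs : ∑ j ∈ Finset.range (n + 1), coeff (R := K) j (f ^ (k + 1)) * coeff (R := K) n ((gg f) ^ j)
        = ∑ j ∈ Finset.range (n + 1), ∑ ab ∈ antidiagonal j,
            coeff (R := K) ab.1 (f ^ k) * coeff (R := K) ab.2 f * coeff (R := K) n ((gg f) ^ (ab.1 + ab.2)) := by
      refine Finset.sum_congr rfl fun j hj => ?_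
      rw [pow_succ, coeff_mul, Finset.sum_mul]
      refine Finset.sum_congr rfl fun ab hab => ?_
      rw [HasAntidiagonal.mem_antidiagonal] at hab
      rw [hab]
    rw [rhs]
    have hdisj : ((Finset.range (n + 1) : Finset ℕ) : Set ℕ).PairwiseDisjoint
        (fun j => (antidiagonal j : Finset (ℕ × ℕ))) := by
      intro x _ y _ hxy
      simp only [Finset.disjoint_left]
      rintro ⟨a, b⟩ ha hb
      rw [HasAntidiagonal.mem_antidiagonal] at ha hb
      exact hxy (ha ▸ hb.symm ▸ rfl)
    rw [← Finset.sum_biUnion hdisj]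
    have hset : (Finset.range (n + 1)).biUnion (fun j => antidiagonal j)
        = (Finset.range (n + 1) ×ˢ Finset.range (n + 1)).filter (fun ab => ab.1 + ab.2 ≤ n) := by
      ext ⟨a, b⟩
      simp only [Finset.mem_biUnion, Finset.mem_range, HasAntidiagonal.mem_antidiagonal, Finset.mem_filter,
        Finset.mem_product]
      constructor
      · rintro ⟨j, hj, rfl⟩
        omega
      · rintro ⟨⟨ha, hb⟩, hab⟩
        exact ⟨a + b, by omega, rfl⟩
    rw [hset, Finset.sum_filter_of_ne, Finset.sum_product]
    rintro ⟨a, b⟩ _ hne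
    by_contra hab
    exact hne (by rw [coeff_gg_pow_of_lt f (by omega), mul_zero])

lemma main [CharZero K] (f : PowerSeries K) : ∀ m : ℕ, 1 ≤ m → ∀ k : ℕ, 1 ≤ k →
    coeff (R := K) m ((gg f) ^ k)
      = (k : K) / (m : K) * (if k ≤ m then coeff (R := K) (m - k) (f ^ m) else 0) := by
  intro m
  induction m using Nat.strong_induction_on with
  | _ m IH =>
    intro hm k hk
    rw [coeff_gg_pow_eq]
    by_cases hkm : k ≤ m
    · rw [if_pos hkm, if_pos hkm, coeff_hh_pow]
      rcases eq_or_lt_of_le hkm with rfl | hlt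
      · rw [Nat.sub_self]
        rw [Finset.sum_range_one, pow_zero, PowerSeries.coeff_one, if_pos rfl, mul_one,
          div_self (Nat.cast_ne_zero.2 (by omega) : (k : K) ≠ 0), one_mul]
      · set n := m - k with hn
        have hn1 : 1 ≤ n := by omega
        have hexp : ∀ j ∈ Finset.range (n + 1), coeff (R := K) j (f ^ k) * coeff (R := K) n ((gg f) ^ j)
            = (n : K)⁻¹ * ((j : K) * coeff (R := K) j (f ^ k) * coeff (R := K) (n - j) (f ^ n)) := by
          intro j hj
          rw [Finset.mem_range] at hj
          rcases Nat.eq_zero_or_pos j with rfl | hj1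
          · rw [pow_zero, PowerSeries.coeff_one, if_neg (by omega)]
            push_cast
            ring
          · rw [IH n (by omega) hn1 j hj1, if_pos (by omega)]
            have hnne : (n : K) ≠ 0 := Nat.cast_ne_zero.2 (by omega)
            field_simp
        rw [Finset.sum_congr rfl hexp, ← Finset.mul_sum]
        have hkey := key f k n n hk
        rw [Finset.Nat.sum_antidiagonal_eq_sum_range_succ_mk] at hkey
        have hmkn : k + n = m := by omega
        rw [hmkn] at hkey
        have hnne : (n : K) ≠ 0 := Nat.cast_ne_zero.2 (by omega)
        have hmne : (m : K) ≠ 0 := Nat.cast_ne_zero.2 (by omega)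
        field_simp
        linear_combination hkey
    · rw [if_neg hkm, if_neg hkm, mul_zero]

end Stmt1Aux


/-- **Lemma 4.4** (a consequence of Lagrange inversion).
For a formal power series `f` over a field of characteristic zero, `k ≥ 1` and all `m ≥ 1`:
`(1/m)·[f^m]_{x^{m-k}} = (1/k)·∑_{n₁+⋯+n_k = m, nᵢ ≥ 1} ∏ᵢ (1/nᵢ)·[f^{nᵢ}]_{x^{nᵢ-1}}`,
where the coefficient of a negative power of `x` is interpreted as `0` (the case `m < k`). -/
theorem stmt1 {K : Type*} [Field K] [CharZero K] (f : PowerSeries K) (k : ℕ) (hk : 1 ≤ k) :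
    ∀ m : ℕ, 1 ≤ m →
      (m : K)⁻¹ * (if k ≤ m then PowerSeries.coeff (R := K) (m - k) (f ^ m) else 0) =
        (k : K)⁻¹ *
          ∑ c ∈ (Fintype.piFinset fun _ : Fin k => Finset.range (m + 1)).filter
              (fun c => (∑ i, c i) = m ∧ ∀ i, 1 ≤ c i),
            ∏ i, ((c i : K)⁻¹ * PowerSeries.coeff (R := K) (c i - 1) (f ^ (c i))) := by
  intro m hm
  have hg := Stmt1Aux.main f m hm k hk
  have hne : ∀ x ∈ Finset.Nat.antidiagonalTuple k m,
      (∏ i, PowerSeries.coeff (R := K) (x i) (Stmt1Aux.gg f)) ≠ 0 → ∀ i, 1 ≤ x i := by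
    intro x _ hprod i
    by_contra h0
    have hxi : x i = 0 := by omega
    exact hprod (Finset.prod_eq_zero (Finset.mem_univ i)
      (by rw [hxi, Stmt1Aux.coeff_gg_zero]))
  have hsets : ((Fintype.piFinset fun _ : Fin k => Finset.range (m + 1)).filter
        (fun c => (∑ i, c i) = m ∧ ∀ i, 1 ≤ c i))
      = (Finset.Nat.antidiagonalTuple k m).filter (fun x => ∀ i, 1 ≤ x i) := by
    ext c
    simp only [Finset.mem_filter, Fintype.mem_piFinset, Finset.mem_range,
      Finset.Nat.mem_antidiagonalTuple]
    constructor
    · rintro ⟨_, hsum, hpos⟩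
      exact ⟨hsum, hpos⟩
    · rintro ⟨hsum, hpos⟩
      refine ⟨fun i => ?_, hsum, hpos⟩
      have h2 : c i ≤ ∑ x, c x :=
        Finset.single_le_sum (fun _ _ => Nat.zero_le _) (Finset.mem_univ i)
      rw [hsum] at h2
      omega
  have hS : PowerSeries.coeff (R := K) m ((Stmt1Aux.gg f) ^ k)
      = ∑ c ∈ (Fintype.piFinset fun _ : Fin k => Finset.range (m + 1)).filter
            (fun c => (∑ i, c i) = m ∧ ∀ i, 1 ≤ c i),
          ∏ i, ((c i : K)⁻¹ * PowerSeries.coeff (R := K) (c i - 1) (f ^ (c i))) := by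
    rw [Stmt1Aux.coeff_pow_tuple, ← Finset.sum_filter_of_ne hne, ← hsets]
    refine Finset.sum_congr rfl fun c hc => Finset.prod_congr rfl fun i _ => ?_
    rw [Finset.mem_filter] at hc
    have h1 : 1 ≤ c i := hc.2.2 i
    have hcoe := Stmt1Aux.main f (c i) h1 1 le_rfl
    rw [pow_one] at hcoe
    rw [hcoe, if_pos h1, Nat.cast_one, one_div]
  rw [← hS, hg]
  have hkne : (k : K) ≠ 0 := Nat.cast_ne_zero.2 (by omega)
  have hmne : (m : K) ≠ 0 := Nat.cast_ne_zero.2 (by omega)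
  field_simp
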